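/- arXiv:2002.11068 — 5 statements merged into one kernel-verified Lean document; each statement's English description precedes it below -/
import Mathlib

section
/- Let x₀ ≥ 2⁹ be real and suppose α > 0 is such that θ(x) ≤ (1 + α)·x for all x > 0. Then for all real x ≥ x₀ one has ∑_{k=3}^{⌊log x / log 2⌋} θ(x^{1/k}) ≤ η·x^{1/3}, where η = (1 + α)·max( f(x₀), f(2^{⌊log x₀ / log 2⌋ + 1}) ). -/
/-- Chebyshev theta function: `θ(x) = ∑_{p ≤ x, p prime} log p`. -/
noncomputable def chebTheta (x : ℝ) : ℝ :=
  ∑ p ∈ (Finset.range (⌊x⌋₊ + 1)).filter Nat.Prime, Real.log p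

/-- Chebyshev psi function: `ψ(x) = ∑_{n ≤ x} Λ(n)`. -/
noncomputable def chebPsi (x : ℝ) : ℝ :=
  ∑ n ∈ Finset.range (⌊x⌋₊ + 1), ArithmeticFunction.vonMangoldt n


/-- The function `f(x) = ∑_{k=3}^{⌊log x / log 2⌋} x^(1/k - 1/3)`. -/
noncomputable def auxF (x : ℝ) : ℝ :=
  ∑ k ∈ Finset.Icc 3 ⌊Real.log x / Real.log 2⌋₊, x ^ ((k : ℝ)⁻¹ - (3 : ℝ)⁻¹)

/- ### Auxiliary material -/

lemma rpow2_le' (x : ℝ) (p q : ℕ) (r : ℝ) (hq : 0 < q) (hx : x = (p:ℝ)/q) (hr : 0 ≤ r)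
    (h : (2:ℝ)^p ≤ r^q) : (2:ℝ) ^ x ≤ r := by
  subst hx
  have hq' : (q:ℝ) ≠ 0 := Nat.cast_ne_zero.mpr hq.ne'
  have key : ((2:ℝ) ^ ((p:ℝ)/q)) ^ q = 2 ^ p := by
    rw [← Real.rpow_natCast ((2:ℝ) ^ ((p:ℝ)/q)) q, ← Real.rpow_mul (by norm_num),
      div_mul_cancel₀ _ hq', Real.rpow_natCast]
  refine le_of_pow_le_pow_left₀ hq.ne' hr ?_
  rw [key]; exact h

lemma le_rpow2' (x : ℝ) (p q : ℕ) (r : ℝ) (hq : 0 < q) (hx : x = (p:ℝ)/q)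
    (h : r^q ≤ (2:ℝ)^p) : r ≤ (2:ℝ) ^ x := by
  subst hx
  have hq' : (q:ℝ) ≠ 0 := Nat.cast_ne_zero.mpr hq.ne'
  have key : ((2:ℝ) ^ ((p:ℝ)/q)) ^ q = 2 ^ p := by
    rw [← Real.rpow_natCast ((2:ℝ) ^ ((p:ℝ)/q)) q, ← Real.rpow_mul (by norm_num),
      div_mul_cancel₀ _ hq', Real.rpow_natCast]
  refine le_of_pow_le_pow_left₀ hq.ne' (by positivity) ?_
  rw [key]; exact h

lemma e_nonpos {k : ℕ} (hk : 3 ≤ k) : (k:ℝ)⁻¹ - (3:ℝ)⁻¹ ≤ 0 := by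
  have h3 : (3:ℝ) ≤ (k:ℝ) := by exact_mod_cast hk
  have h : (k:ℝ)⁻¹ ≤ (3:ℝ)⁻¹ := by gcongr
  linarith

noncomputable def auxG (m : ℕ) : ℝ :=
  ∑ k ∈ Finset.Icc 3 m, (2:ℝ) ^ ((m:ℝ) * ((k:ℝ)⁻¹ - (3:ℝ)⁻¹))

lemma Dk_bound (k m : ℕ) (hk3 : 3 ≤ k) (hm : 10 ≤ m)
    (hnum : (2:ℝ) ^ ((2:ℝ)/3) ≤
      7 * ((2:ℝ) ^ ((10:ℝ)/(k:ℝ)) - (2:ℝ) ^ ((10:ℝ)/(k:ℝ) + ((k:ℝ)⁻¹ - (3:ℝ)⁻¹)))) :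
    (7:ℝ)⁻¹ * (2:ℝ) ^ (1 - ((m:ℝ)+1)/3) ≤
      (2:ℝ) ^ ((m:ℝ) * ((k:ℝ)⁻¹ - (3:ℝ)⁻¹)) - (2:ℝ) ^ (((m:ℝ)+1) * ((k:ℝ)⁻¹ - (3:ℝ)⁻¹)) := by
  set e : ℝ := (k:ℝ)⁻¹ - (3:ℝ)⁻¹ with he
  have heneg : e ≤ 0 := e_nonpos hk3
  have h2e : (2:ℝ) ^ e ≤ 1 := Real.rpow_le_one_of_one_le_of_nonpos one_le_two heneg
  have hm' : (10:ℝ) ≤ (m:ℝ) := by exact_mod_cast hm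
  have hkpos : (0:ℝ) < (k:ℝ) := by
    have h3 : (3:ℝ) ≤ (k:ℝ) := by exact_mod_cast hk3
    linarith
  have hA : (2:ℝ) ^ ((10:ℝ)/(k:ℝ)) ≤ (2:ℝ) ^ ((m:ℝ)/(k:ℝ)) := by
    apply Real.rpow_le_rpow_of_exponent_le one_le_two
    gcongr
  have key : (7:ℝ)⁻¹ * (2:ℝ) ^ ((2:ℝ)/3) ≤ (2:ℝ) ^ ((m:ℝ)/(k:ℝ)) * (1 - (2:ℝ)^e) := by
    have h1 : (2:ℝ) ^ ((10:ℝ)/(k:ℝ) + e) = (2:ℝ) ^ ((10:ℝ)/(k:ℝ)) * (2:ℝ)^e :=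
      Real.rpow_add two_pos _ _
    have h2 : (2:ℝ) ^ ((10:ℝ)/(k:ℝ)) * (1 - (2:ℝ)^e) ≤ (2:ℝ) ^ ((m:ℝ)/(k:ℝ)) * (1 - (2:ℝ)^e) :=
      mul_le_mul_of_nonneg_right hA (by linarith)
    rw [h1] at hnum
    nlinarith
  have hT : (0:ℝ) < (2:ℝ) ^ (-(m:ℝ)/3) := Real.rpow_pos_of_pos two_pos _
  have e1 : (2:ℝ) ^ (1 - ((m:ℝ)+1)/3) = (2:ℝ) ^ ((2:ℝ)/3) * (2:ℝ) ^ (-(m:ℝ)/3) := by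
    rw [← Real.rpow_add two_pos]; congr 1; ring
  have e2 : (2:ℝ) ^ ((m:ℝ) * e) = (2:ℝ) ^ ((m:ℝ)/(k:ℝ)) * (2:ℝ) ^ (-(m:ℝ)/3) := by
    rw [← Real.rpow_add two_pos]; congr 1; rw [he]; ring
  have e3 : (2:ℝ) ^ (((m:ℝ)+1) * e) =
      ((2:ℝ) ^ ((m:ℝ)/(k:ℝ)) * (2:ℝ) ^ (-(m:ℝ)/3)) * (2:ℝ) ^ e := by
    rw [← Real.rpow_add two_pos, ← Real.rpow_add two_pos]; congr 1; rw [he]; ring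
  rw [e1, e2, e3]
  nlinarith [mul_le_mul_of_nonneg_right key hT.le]

lemma num4 : (2:ℝ) ^ ((2:ℝ)/3) ≤
    7 * ((2:ℝ) ^ ((10:ℝ)/((4:ℕ):ℝ)) - (2:ℝ) ^ ((10:ℝ)/((4:ℕ):ℝ) + (((4:ℕ):ℝ)⁻¹ - (3:ℝ)⁻¹))) := by
  have h1 : (5.65:ℝ) ≤ (2:ℝ) ^ ((10:ℝ)/((4:ℕ):ℝ)) :=
    le_rpow2' _ 5 2 _ (by norm_num) (by push_cast; norm_num) (by norm_num)
  have h2 : (2:ℝ) ^ ((10:ℝ)/((4:ℕ):ℝ) + (((4:ℕ):ℝ)⁻¹ - (3:ℝ)⁻¹)) ≤ 5.36 :=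
    rpow2_le' _ 29 12 _ (by norm_num) (by push_cast; norm_num) (by norm_num) (by norm_num)
  have h3 : (2:ℝ) ^ ((2:ℝ)/3) ≤ 1.59 :=
    rpow2_le' _ 2 3 _ (by norm_num) (by push_cast; norm_num) (by norm_num) (by norm_num)
  linarith

lemma num5 : (2:ℝ) ^ ((2:ℝ)/3) ≤
    7 * ((2:ℝ) ^ ((10:ℝ)/((5:ℕ):ℝ)) - (2:ℝ) ^ ((10:ℝ)/((5:ℕ):ℝ) + (((5:ℕ):ℝ)⁻¹ - (3:ℝ)⁻¹))) := by
  have h1 : (3.99:ℝ) ≤ (2:ℝ) ^ ((10:ℝ)/((5:ℕ):ℝ)) :=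
    le_rpow2' _ 2 1 _ (by norm_num) (by push_cast; norm_num) (by norm_num)
  have h2 : (2:ℝ) ^ ((10:ℝ)/((5:ℕ):ℝ) + (((5:ℕ):ℝ)⁻¹ - (3:ℝ)⁻¹)) ≤ 3.66 :=
    rpow2_le' _ 28 15 _ (by norm_num) (by push_cast; norm_num) (by norm_num) (by norm_num)
  have h3 : (2:ℝ) ^ ((2:ℝ)/3) ≤ 1.59 :=
    rpow2_le' _ 2 3 _ (by norm_num) (by push_cast; norm_num) (by norm_num) (by norm_num)
  linarith

lemma num6 : (2:ℝ) ^ ((2:ℝ)/3) ≤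
    7 * ((2:ℝ) ^ ((10:ℝ)/((6:ℕ):ℝ)) - (2:ℝ) ^ ((10:ℝ)/((6:ℕ):ℝ) + (((6:ℕ):ℝ)⁻¹ - (3:ℝ)⁻¹))) := by
  have h1 : (3.17:ℝ) ≤ (2:ℝ) ^ ((10:ℝ)/((6:ℕ):ℝ)) :=
    le_rpow2' _ 5 3 _ (by norm_num) (by push_cast; norm_num) (by norm_num)
  have h2 : (2:ℝ) ^ ((10:ℝ)/((6:ℕ):ℝ) + (((6:ℕ):ℝ)⁻¹ - (3:ℝ)⁻¹)) ≤ 2.83 :=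
    rpow2_le' _ 3 2 _ (by norm_num) (by push_cast; norm_num) (by norm_num) (by norm_num)
  have h3 : (2:ℝ) ^ ((2:ℝ)/3) ≤ 1.59 :=
    rpow2_le' _ 2 3 _ (by norm_num) (by push_cast; norm_num) (by norm_num) (by norm_num)
  linarith

lemma num7 : (2:ℝ) ^ ((2:ℝ)/3) ≤
    7 * ((2:ℝ) ^ ((10:ℝ)/((7:ℕ):ℝ)) - (2:ℝ) ^ ((10:ℝ)/((7:ℕ):ℝ) + (((7:ℕ):ℝ)⁻¹ - (3:ℝ)⁻¹))) := by
  have h1 : (2.69:ℝ) ≤ (2:ℝ) ^ ((10:ℝ)/((7:ℕ):ℝ)) :=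
    le_rpow2' _ 10 7 _ (by norm_num) (by push_cast; norm_num) (by norm_num)
  have h2 : (2:ℝ) ^ ((10:ℝ)/((7:ℕ):ℝ) + (((7:ℕ):ℝ)⁻¹ - (3:ℝ)⁻¹)) ≤ 2.37 :=
    rpow2_le' _ 26 21 _ (by norm_num) (by push_cast; norm_num) (by norm_num) (by norm_num)
  have h3 : (2:ℝ) ^ ((2:ℝ)/3) ≤ 1.59 :=
    rpow2_le' _ 2 3 _ (by norm_num) (by push_cast; norm_num) (by norm_num) (by norm_num)
  linarith

lemma num8 : (2:ℝ) ^ ((2:ℝ)/3) ≤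
    7 * ((2:ℝ) ^ ((10:ℝ)/((8:ℕ):ℝ)) - (2:ℝ) ^ ((10:ℝ)/((8:ℕ):ℝ) + (((8:ℕ):ℝ)⁻¹ - (3:ℝ)⁻¹))) := by
  have h1 : (2.37:ℝ) ≤ (2:ℝ) ^ ((10:ℝ)/((8:ℕ):ℝ)) :=
    le_rpow2' _ 5 4 _ (by norm_num) (by push_cast; norm_num) (by norm_num)
  have h2 : (2:ℝ) ^ ((10:ℝ)/((8:ℕ):ℝ) + (((8:ℕ):ℝ)⁻¹ - (3:ℝ)⁻¹)) ≤ 2.07 :=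
    rpow2_le' _ 25 24 _ (by norm_num) (by push_cast; norm_num) (by norm_num) (by norm_num)
  have h3 : (2:ℝ) ^ ((2:ℝ)/3) ≤ 1.59 :=
    rpow2_le' _ 2 3 _ (by norm_num) (by push_cast; norm_num) (by norm_num) (by norm_num)
  linarith

lemma num9 : (2:ℝ) ^ ((2:ℝ)/3) ≤
    7 * ((2:ℝ) ^ ((10:ℝ)/((9:ℕ):ℝ)) - (2:ℝ) ^ ((10:ℝ)/((9:ℕ):ℝ) + (((9:ℕ):ℝ)⁻¹ - (3:ℝ)⁻¹))) := by
  have h1 : (2.15:ℝ) ≤ (2:ℝ) ^ ((10:ℝ)/((9:ℕ):ℝ)) :=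
    le_rpow2' _ 10 9 _ (by norm_num) (by push_cast; norm_num) (by norm_num)
  have h2 : (2:ℝ) ^ ((10:ℝ)/((9:ℕ):ℝ) + (((9:ℕ):ℝ)⁻¹ - (3:ℝ)⁻¹)) ≤ 1.86 :=
    rpow2_le' _ 8 9 _ (by norm_num) (by push_cast; norm_num) (by norm_num) (by norm_num)
  have h3 : (2:ℝ) ^ ((2:ℝ)/3) ≤ 1.59 :=
    rpow2_le' _ 2 3 _ (by norm_num) (by push_cast; norm_num) (by norm_num) (by norm_num)
  linarith

lemma num10 : (2:ℝ) ^ ((2:ℝ)/3) ≤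
    7 * ((2:ℝ) ^ ((10:ℝ)/((10:ℕ):ℝ)) - (2:ℝ) ^ ((10:ℝ)/((10:ℕ):ℝ) + (((10:ℕ):ℝ)⁻¹ - (3:ℝ)⁻¹))) := by
  have h1 : (1.99:ℝ) ≤ (2:ℝ) ^ ((10:ℝ)/((10:ℕ):ℝ)) :=
    le_rpow2' _ 1 1 _ (by norm_num) (by push_cast; norm_num) (by norm_num)
  have h2 : (2:ℝ) ^ ((10:ℝ)/((10:ℕ):ℝ) + (((10:ℕ):ℝ)⁻¹ - (3:ℝ)⁻¹)) ≤ 1.71 :=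
    rpow2_le' _ 23 30 _ (by norm_num) (by push_cast; norm_num) (by norm_num) (by norm_num)
  have h3 : (2:ℝ) ^ ((2:ℝ)/3) ≤ 1.59 :=
    rpow2_le' _ 2 3 _ (by norm_num) (by push_cast; norm_num) (by norm_num) (by norm_num)
  linarith

lemma auxG_step (m : ℕ) (hm : 10 ≤ m) : auxG (m+1) ≤ auxG m := by
  have h3m : 3 ≤ m := by omega
  have hm1 : ((m:ℝ) + 1) ≠ 0 := by positivity
  unfold auxG
  rw [Finset.sum_Icc_succ_top (by omega : 3 ≤ m + 1)]
  push_cast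
  -- the new top term equals 2 ^ (1 - (m+1)/3)
  have hnew : (2:ℝ) ^ (((m:ℝ)+1) * (((m:ℝ)+1)⁻¹ - (3:ℝ)⁻¹)) = (2:ℝ) ^ (1 - ((m:ℝ)+1)/3) := by
    congr 1; field_simp
  rw [hnew]
  -- bound the new term by the total decrease of the terms 4..10
  have hsum710 : (2:ℝ) ^ (1 - ((m:ℝ)+1)/3) ≤
      ∑ k ∈ (Finset.Icc 4 10 : Finset ℕ),
        ((2:ℝ) ^ ((m:ℝ) * ((k:ℝ)⁻¹ - (3:ℝ)⁻¹)) - (2:ℝ) ^ (((m:ℝ)+1) * ((k:ℝ)⁻¹ - (3:ℝ)⁻¹))) := by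
    have hterm : ∀ k ∈ (Finset.Icc 4 10 : Finset ℕ), (7:ℝ)⁻¹ * (2:ℝ) ^ (1 - ((m:ℝ)+1)/3) ≤
        (2:ℝ) ^ ((m:ℝ) * ((k:ℝ)⁻¹ - (3:ℝ)⁻¹)) - (2:ℝ) ^ (((m:ℝ)+1) * ((k:ℝ)⁻¹ - (3:ℝ)⁻¹)) := by
      intro k hk
      rw [Finset.mem_Icc] at hk
      obtain ⟨hk4, hk10⟩ := hk
      interval_cases k
      · exact Dk_bound 4 m (by norm_num) hm num4
      · exact Dk_bound 5 m (by norm_num) hm num5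
      · exact Dk_bound 6 m (by norm_num) hm num6
      · exact Dk_bound 7 m (by norm_num) hm num7
      · exact Dk_bound 8 m (by norm_num) hm num8
      · exact Dk_bound 9 m (by norm_num) hm num9
      · exact Dk_bound 10 m (by norm_num) hm num10
    have hcard : ∑ _k ∈ (Finset.Icc 4 10 : Finset ℕ), (7:ℝ)⁻¹ * (2:ℝ) ^ (1 - ((m:ℝ)+1)/3)
        = (2:ℝ) ^ (1 - ((m:ℝ)+1)/3) := by
      rw [Finset.sum_const, Nat.card_Icc]
      norm_num
      try ring
    rw [← hcard]
    exact Finset.sum_le_sum hterm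
  have hsub : Finset.Icc 4 10 ⊆ Finset.Icc 3 m := Finset.Icc_subset_Icc (by omega) (by omega)
  have hnonneg : ∀ k ∈ Finset.Icc 3 m,
      (0:ℝ) ≤ (2:ℝ) ^ ((m:ℝ) * ((k:ℝ)⁻¹ - (3:ℝ)⁻¹)) - (2:ℝ) ^ (((m:ℝ)+1) * ((k:ℝ)⁻¹ - (3:ℝ)⁻¹)) := by
    intro k hk
    rw [Finset.mem_Icc] at hk
    have he := e_nonpos hk.1
    have : (2:ℝ) ^ (((m:ℝ)+1) * ((k:ℝ)⁻¹ - (3:ℝ)⁻¹)) ≤ (2:ℝ) ^ ((m:ℝ) * ((k:ℝ)⁻¹ - (3:ℝ)⁻¹)) := by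
      apply Real.rpow_le_rpow_of_exponent_le one_le_two
      nlinarith
    linarith
  have hsum3m : (2:ℝ) ^ (1 - ((m:ℝ)+1)/3) ≤
      ∑ k ∈ Finset.Icc 3 m,
        ((2:ℝ) ^ ((m:ℝ) * ((k:ℝ)⁻¹ - (3:ℝ)⁻¹)) - (2:ℝ) ^ (((m:ℝ)+1) * ((k:ℝ)⁻¹ - (3:ℝ)⁻¹))) := by
    refine hsum710.trans (Finset.sum_le_sum_of_subset_of_nonneg hsub ?_)
    intro k hk _
    exact hnonneg k hk
  rw [Finset.sum_sub_distrib] at hsum3m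
  linarith

lemma auxG_mono (a b : ℕ) (h10 : 10 ≤ a) (hab : a ≤ b) : auxG b ≤ auxG a := by
  induction b, hab using Nat.le_induction with
  | base => exact le_refl _
  | succ n hn ih => exact le_trans (auxG_step n (by omega)) ih

lemma auxF_two_pow (m : ℕ) : auxF ((2:ℝ)^m) = auxG m := by
  unfold auxF auxG
  have hlog : Real.log ((2:ℝ)^m) / Real.log 2 = (m:ℝ) := by
    rw [Real.log_pow, mul_div_assoc, div_self (ne_of_gt (Real.log_pos one_lt_two)), mul_one]
  rw [hlog, Nat.floor_natCast]
  refine Finset.sum_congr rfl ?_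
  intro k _
  rw [← Real.rpow_natCast 2 m, ← Real.rpow_mul (by norm_num)]

theorem statement4 (x₀ α : ℝ) (hx₀ : x₀ ≥ 2 ^ 9) (hα : α > 0)
    (hθ : ∀ x : ℝ, x > 0 → chebTheta x ≤ (1 + α) * x) :
    ∀ x : ℝ, x ≥ x₀ →
      ∑ k ∈ Finset.Icc 3 ⌊Real.log x / Real.log 2⌋₊, chebTheta (x ^ ((k : ℝ)⁻¹)) ≤
        ((1 + α) * max (auxF x₀) (auxF ((2 : ℝ) ^ (⌊Real.log x₀ / Real.log 2⌋₊ + 1)))) *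
          x ^ ((3 : ℝ)⁻¹) := by
  intro x hx
  have hx0pos : (0:ℝ) < x₀ := lt_of_lt_of_le (by norm_num) hx₀
  have hxpos : (0:ℝ) < x := lt_of_lt_of_le hx0pos hx
  have hx01 : (1:ℝ) ≤ x₀ := le_trans (by norm_num) hx₀
  have hx1 : (1:ℝ) ≤ x := hx01.trans hx
  have hlog2 : (0:ℝ) < Real.log 2 := Real.log_pos one_lt_two
  set N := ⌊Real.log x₀ / Real.log 2⌋₊ with hN
  set K := ⌊Real.log x / Real.log 2⌋₊ with hK
  set M := max (auxF x₀) (auxF ((2 : ℝ) ^ (N + 1))) with hM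
  -- Step 1
  have step1 : ∑ k ∈ Finset.Icc 3 K, chebTheta (x ^ ((k:ℝ)⁻¹)) ≤
      (1+α) * (auxF x * x ^ ((3:ℝ)⁻¹)) := by
    have h1 : ∀ k ∈ Finset.Icc 3 K, chebTheta (x ^ ((k:ℝ)⁻¹)) ≤
        (1+α) * (x ^ ((k:ℝ)⁻¹ - (3:ℝ)⁻¹) * x ^ ((3:ℝ)⁻¹)) := by
      intro k _
      have hxk : (0:ℝ) < x ^ ((k:ℝ)⁻¹) := Real.rpow_pos_of_pos hxpos _
      calc chebTheta (x ^ ((k:ℝ)⁻¹)) ≤ (1+α) * x ^ ((k:ℝ)⁻¹) := hθ _ hxk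
        _ = (1+α) * (x ^ ((k:ℝ)⁻¹ - (3:ℝ)⁻¹) * x ^ ((3:ℝ)⁻¹)) := by
            rw [← Real.rpow_add hxpos,
              show (k:ℝ)⁻¹ - (3:ℝ)⁻¹ + (3:ℝ)⁻¹ = (k:ℝ)⁻¹ from by ring]
    calc ∑ k ∈ Finset.Icc 3 K, chebTheta (x ^ ((k:ℝ)⁻¹))
        ≤ ∑ k ∈ Finset.Icc 3 K, (1+α) * (x ^ ((k:ℝ)⁻¹ - (3:ℝ)⁻¹) * x ^ ((3:ℝ)⁻¹)) :=
          Finset.sum_le_sum h1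
      _ = (1+α) * (auxF x * x ^ ((3:ℝ)⁻¹)) := by
          simp only [auxF, ← hK, ← Finset.mul_sum, Finset.sum_mul]
  -- Step 2 : auxF x ≤ M
  have hNK : N ≤ K := by
    apply Nat.floor_le_floor
    gcongr
  have hN9 : 9 ≤ N := by
    apply Nat.le_floor
    rw [le_div_iff₀ hlog2]
    have h := Real.log_le_log (by norm_num : (0:ℝ) < 2^9) hx₀
    rw [Real.log_pow] at h
    push_cast at h ⊢
    linarith
  have h2K : (2:ℝ)^K ≤ x := by
    have h1 : (K:ℝ) ≤ Real.log x / Real.log 2 := Nat.floor_le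
      (div_nonneg (Real.log_nonneg hx1) hlog2.le)
    have h2 : (K:ℝ) * Real.log 2 ≤ Real.log x := by rwa [← le_div_iff₀ hlog2]
    have h3 : Real.log ((2:ℝ)^K) ≤ Real.log x := by rwa [Real.log_pow]
    exact (Real.log_le_log_iff (by positivity) hxpos).mp h3
  have step2 : auxF x ≤ M := by
    rcases eq_or_lt_of_le hNK with hEQ | hLT
    · refine le_trans ?_ (le_max_left _ _)
      simp only [auxF, ← hK, ← hN, ← hEQ]
      apply Finset.sum_le_sum
      intro k hk
      rw [Finset.mem_Icc] at hk
      exact Real.rpow_le_rpow_of_nonpos hx0pos hx (e_nonpos hk.1)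
    · refine le_trans ?_ (le_max_right _ _)
      have hGK : auxF x ≤ auxG K := by
        simp only [auxF, ← hK, auxG]
        apply Finset.sum_le_sum
        intro k hk
        rw [Finset.mem_Icc] at hk
        have he := e_nonpos hk.1
        calc x ^ ((k:ℝ)⁻¹ - (3:ℝ)⁻¹) ≤ ((2:ℝ)^K) ^ ((k:ℝ)⁻¹ - (3:ℝ)⁻¹) :=
              Real.rpow_le_rpow_of_nonpos (by positivity) h2K he
          _ = (2:ℝ) ^ ((K:ℝ) * ((k:ℝ)⁻¹ - (3:ℝ)⁻¹)) := by
              rw [← Real.rpow_natCast 2 K, ← Real.rpow_mul (by norm_num)]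
      have hmono := auxG_mono (N+1) K (by omega) (by omega)
      have hfold : auxF ((2:ℝ)^(N+1)) = auxG (N+1) := auxF_two_pow (N+1)
      rw [hfold]
      exact hGK.trans hmono
  -- combine
  have hxp : (0:ℝ) ≤ x ^ ((3:ℝ)⁻¹) := (Real.rpow_pos_of_pos hxpos _).le
  have hα1 : (0:ℝ) ≤ 1 + α := by linarith
  calc ∑ k ∈ Finset.Icc 3 K, chebTheta (x ^ ((k:ℝ)⁻¹)) ≤ (1+α) * (auxF x * x ^ ((3:ℝ)⁻¹)) := step1
    _ ≤ (1+α) * (M * x ^ ((3:ℝ)⁻¹)) :=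
        mul_le_mul_of_nonneg_left (mul_le_mul_of_nonneg_right step2 hxp) hα1
    _ = ((1+α) * M) * x ^ ((3:ℝ)⁻¹) := by ring
end

section
/- Let k ∈ {1,2,3,4,5}. Assume there exist a positive integer n, nonnegative reals a₁,…,a_n, and x₀ > 0 such that ψ(x) − θ(x) ≤ ∑_{ℓ=1}^{n} a_ℓ·x^{1/(ℓ+1)} for all x ≥ x₀. Let b, b′ be reals with b′ > b ≥ 2k and x₀ ≤ e^b, and assume there exists ε > 0 such that |ψ(x) − x| ≤ ε·x for all x ≥ e^b. Then for all x ∈ [e^b, e^{b′}] one has |θ(x) − x| ≤ B̃_k·x/(log x)^k, where B̃_k = b^k·∑_{ℓ=1}^{n} a_ℓ·exp(−ℓb/(ℓ+1)) + ε·(b′)^k. -/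
lemma theta_le_psi (x : ℝ) : chebTheta x ≤ chebPsi x := by
  unfold chebTheta chebPsi
  rw [show ∑ p ∈ (Finset.range (⌊x⌋₊ + 1)).filter Nat.Prime, Real.log p
      = ∑ p ∈ (Finset.range (⌊x⌋₊ + 1)).filter Nat.Prime,
          (ArithmeticFunction.vonMangoldt p : ℝ) from
    Finset.sum_congr rfl fun p hp =>
      (ArithmeticFunction.vonMangoldt_apply_prime (Finset.mem_filter.mp hp).2).symm]
  exact Finset.sum_le_sum_of_subset_of_nonneg (Finset.filter_subset _ _)
    (fun i _ _ => ArithmeticFunction.vonMangoldt_nonneg)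

lemma key (k : ℕ) (b L : ℝ) (hb : 0 < b) (h2k : 2 * (k : ℝ) ≤ b) (hL : b ≤ L) :
    L ^ k ≤ b ^ k * Real.exp ((L - b) / 2) := by
  have hLb : (0:ℝ) < L / b := div_pos (lt_of_lt_of_le hb hL) hb
  have hlog : Real.log ((L / b) ^ k) ≤ (L - b) / 2 := by
    rw [Real.log_pow]
    have h1 : Real.log (L / b) ≤ L / b - 1 := Real.log_le_sub_one_of_pos hLb
    have h2 : (k : ℝ) * (L / b - 1) ≤ (L - b) / 2 := by
      rw [div_sub_one hb.ne', mul_div_assoc', div_le_div_iff₀ hb (by norm_num : (0:ℝ) < 2)]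
      nlinarith [sub_nonneg.mpr hL]
    calc (k : ℝ) * Real.log (L / b) ≤ (k : ℝ) * (L / b - 1) :=
          mul_le_mul_of_nonneg_left h1 (Nat.cast_nonneg k)
      _ ≤ (L - b) / 2 := h2
  have h3 : (L / b) ^ k ≤ Real.exp ((L - b) / 2) :=
    (Real.log_le_iff_le_exp (pow_pos hLb k)).mp hlog
  calc L ^ k = b ^ k * (L / b) ^ k := by rw [div_pow]; field_simp
    _ ≤ b ^ k * Real.exp ((L - b) / 2) :=
        mul_le_mul_of_nonneg_left h3 (pow_nonneg hb.le k)

theorem statement9 (k : ℕ) (hk1 : 1 ≤ k) (hk5 : k ≤ 5)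
    (n : ℕ) (hn : 0 < n) (a : ℕ → ℝ) (ha : ∀ ℓ ∈ Finset.Icc 1 n, 0 ≤ a ℓ)
    (x₀ : ℝ) (hx₀ : 0 < x₀)
    (hψθ : ∀ x : ℝ, x ≥ x₀ →
      chebPsi x - chebTheta x ≤ ∑ ℓ ∈ Finset.Icc 1 n, a ℓ * x ^ (((ℓ : ℝ) + 1)⁻¹))
    (b b' : ℝ) (hbb' : b < b') (hb : 2 * (k : ℝ) ≤ b) (hx₀b : x₀ ≤ Real.exp b)
    (ε : ℝ) (hε : ε > 0)
    (hψ : ∀ x : ℝ, x ≥ Real.exp b → |chebPsi x - x| ≤ ε * x) :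
    ∀ x : ℝ, Real.exp b ≤ x → x ≤ Real.exp b' →
      |chebTheta x - x| ≤
        (b ^ k * ∑ ℓ ∈ Finset.Icc 1 n, a ℓ * Real.exp (-((ℓ : ℝ) * b) / ((ℓ : ℝ) + 1))
            + ε * b' ^ k) * x / (Real.log x) ^ k := by
  intro x hxb hxb'
  have hx0 : 0 < x := lt_of_lt_of_le (Real.exp_pos b) hxb
  set L := Real.log x with hLdef
  have hbpos : 0 < b := by
    have : (1:ℝ) ≤ (k:ℝ) := by exact_mod_cast hk1
    linarith
  have hLb : b ≤ L := (Real.le_log_iff_exp_le hx0).mpr hxb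
  have hLb' : L ≤ b' := (Real.log_le_iff_le_exp hx0).mpr hxb'
  have hLpos : 0 < L := lt_of_lt_of_le hbpos hLb
  have hLk : (0:ℝ) < L ^ k := pow_pos hLpos k
  have hxL : x = Real.exp L := (Real.exp_log hx0).symm
  have hterm : ∀ ℓ ∈ Finset.Icc 1 n,
      a ℓ * x ^ (((ℓ : ℝ) + 1)⁻¹)
        ≤ a ℓ * Real.exp (-((ℓ : ℝ) * b) / ((ℓ : ℝ) + 1)) * (b ^ k * x / L ^ k) := by
    intro ℓ hℓ
    have hℓ1 : 1 ≤ ℓ := (Finset.mem_Icc.mp hℓ).1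
    have hℓR : (1:ℝ) ≤ (ℓ:ℝ) := by exact_mod_cast hℓ1
    have hℓ1pos : (0:ℝ) < (ℓ:ℝ) + 1 := by linarith
    have haℓ : 0 ≤ a ℓ := ha ℓ hℓ
    have hrpow : x ^ (((ℓ : ℝ) + 1)⁻¹) = Real.exp (L * ((ℓ:ℝ) + 1)⁻¹) := by
      rw [Real.rpow_def_of_pos hx0]
    rw [hrpow, mul_assoc]
    refine mul_le_mul_of_nonneg_left ?_ haℓ
    rw [← mul_div_assoc, le_div_iff₀ hLk]
    have hkey : L ^ k ≤ b ^ k * Real.exp ((ℓ:ℝ) * (L - b) / ((ℓ:ℝ) + 1)) := by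
      refine le_trans (key k b L hbpos hb hLb) ?_
      refine mul_le_mul_of_nonneg_left (Real.exp_le_exp.mpr ?_) (pow_nonneg hbpos.le k)
      rw [div_le_div_iff₀ (by norm_num : (0:ℝ) < 2) hℓ1pos]
      nlinarith [sub_nonneg.mpr hLb]
    have hexp : Real.exp (-((ℓ : ℝ) * b) / ((ℓ : ℝ) + 1)) * x
        = Real.exp (L * ((ℓ:ℝ) + 1)⁻¹) * Real.exp ((ℓ:ℝ) * (L - b) / ((ℓ:ℝ) + 1)) := by
      rw [hxL, ← Real.exp_add, ← Real.exp_add]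
      congr 1
      field_simp
      ring
    calc Real.exp (L * ((ℓ:ℝ) + 1)⁻¹) * L ^ k
        ≤ Real.exp (L * ((ℓ:ℝ) + 1)⁻¹)
            * (b ^ k * Real.exp ((ℓ:ℝ) * (L - b) / ((ℓ:ℝ) + 1))) :=
          mul_le_mul_of_nonneg_left hkey (Real.exp_pos _).le
      _ = Real.exp (-((ℓ : ℝ) * b) / ((ℓ : ℝ) + 1)) * (b ^ k * x) := by
          linear_combination (-(b:ℝ)^k) * hexp
  have hS : ∑ ℓ ∈ Finset.Icc 1 n, a ℓ * x ^ (((ℓ : ℝ) + 1)⁻¹)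
      ≤ (b ^ k * ∑ ℓ ∈ Finset.Icc 1 n,
          a ℓ * Real.exp (-((ℓ : ℝ) * b) / ((ℓ : ℝ) + 1))) * x / L ^ k := by
    calc ∑ ℓ ∈ Finset.Icc 1 n, a ℓ * x ^ (((ℓ : ℝ) + 1)⁻¹)
        ≤ ∑ ℓ ∈ Finset.Icc 1 n,
            a ℓ * Real.exp (-((ℓ : ℝ) * b) / ((ℓ : ℝ) + 1)) * (b ^ k * x / L ^ k) :=
          Finset.sum_le_sum hterm
      _ = (b ^ k * ∑ ℓ ∈ Finset.Icc 1 n,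
            a ℓ * Real.exp (-((ℓ : ℝ) * b) / ((ℓ : ℝ) + 1))) * x / L ^ k := by
          rw [← Finset.sum_mul]; ring
  have hε2 : ε * x ≤ ε * b' ^ k * x / L ^ k := by
    rw [le_div_iff₀ hLk]
    have hpow : L ^ k ≤ b' ^ k := pow_le_pow_left₀ hLpos.le hLb' k
    nlinarith [mul_pos hε hx0]
  have hgap : chebPsi x - chebTheta x
      ≤ ∑ ℓ ∈ Finset.Icc 1 n, a ℓ * x ^ (((ℓ : ℝ) + 1)⁻¹) :=
    hψθ x (le_trans hx₀b hxb)
  have habs : |chebTheta x - x| ≤ |chebPsi x - x| + (chebPsi x - chebTheta x) := by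
    have h0 : chebTheta x - x = (chebPsi x - x) - (chebPsi x - chebTheta x) := by ring
    rw [h0]
    refine le_trans (abs_sub _ _) ?_
    rw [abs_of_nonneg (sub_nonneg.mpr (theta_le_psi x))]
  calc |chebTheta x - x|
      ≤ |chebPsi x - x| + (chebPsi x - chebTheta x) := habs
    _ ≤ ε * x + ∑ ℓ ∈ Finset.Icc 1 n, a ℓ * x ^ (((ℓ : ℝ) + 1)⁻¹) :=
        add_le_add (hψ x hxb) hgap
    _ ≤ ε * b' ^ k * x / L ^ k
          + (b ^ k * ∑ ℓ ∈ Finset.Icc 1 n,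
              a ℓ * Real.exp (-((ℓ : ℝ) * b) / ((ℓ : ℝ) + 1))) * x / L ^ k :=
        add_le_add hε2 hS
    _ = (b ^ k * ∑ ℓ ∈ Finset.Icc 1 n,
          a ℓ * Real.exp (-((ℓ : ℝ) * b) / ((ℓ : ℝ) + 1)) + ε * b' ^ k) * x / L ^ k := by
        ring
end

section
/- Let 1 ≤ u < v be reals. Assume there exist c > 0 and C > 0 such that −c ≤ (x − ψ(x))/√x ≤ C for every x ∈ [u, v], and assume there exists c₀ > 0 such that ψ(x) < c₀·x for all x > 0. If u² < v, then θ(x) ≥ x − (C + 1)·x^{1/2} − c₀·x^{1/3} − c·x^{1/4} − c₀·x^{1/5} for all x ∈ [u², v]. -/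
lemma psi_eq_aux (M : ℕ) :
    ∑ n ∈ Finset.range (M + 1), ArithmeticFunction.vonMangoldt n
      = ∑ p ∈ (Finset.range (M + 1)).filter Nat.Prime,
          (Nat.log p M : ℝ) * Real.log p := by
  rw [← Finset.sum_filter_of_ne
        (p := fun n => IsPrimePow n)
        (fun n _ h => ArithmeticFunction.vonMangoldt_ne_zero_iff.mp h)]
  have hstep : ∀ p ∈ (Finset.range (M+1)).filter Nat.Prime,
      (Nat.log p M : ℝ) * Real.log p
        = ∑ _k ∈ Finset.Icc 1 (Nat.log p M), Real.log p := by
    intro p hp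
    rw [Finset.sum_const, Nat.card_Icc]
    simp [nsmul_eq_mul]
  rw [Finset.sum_congr rfl hstep, Finset.sum_sigma' ((Finset.range (M+1)).filter Nat.Prime)
      (fun p => Finset.Icc 1 (Nat.log p M)) (fun p _k => Real.log p)]
  symm
  refine Finset.sum_nbij' (i := fun q : Σ _p : ℕ, ℕ => q.1 ^ q.2)
      (j := fun n : ℕ => (⟨n.minFac, (Nat.factorization n) n.minFac⟩ : Σ _p : ℕ, ℕ))
      ?_ ?_ ?_ ?_ ?_
  · rintro ⟨p, k⟩ hq
    simp only [Finset.mem_sigma, Finset.mem_filter, Finset.mem_range, Finset.mem_Icc] at hq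
    obtain ⟨⟨hpM, hp⟩, hk1, hk2⟩ := hq
    have hM : M ≠ 0 := by
      have := hp.two_le; omega
    have hle : p ^ k ≤ M := (Nat.le_log_iff_pow_le hp.one_lt hM).symm.mpr hk2
    simp only [Finset.mem_filter, Finset.mem_range]
    exact ⟨by omega, hp.isPrimePow.pow (by omega)⟩
  · rintro n hn
    simp only [Finset.mem_filter, Finset.mem_range] at hn
    obtain ⟨hnM, hpp⟩ := hn
    obtain ⟨p, k, hp, hk, rfl⟩ := hpp
    rw [← Nat.prime_iff] at hp
    simp only [Finset.mem_sigma, Finset.mem_filter, Finset.mem_range, Finset.mem_Icc,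
      hp.pow_minFac hk.ne', hp.factorization_pow, Finsupp.single_eq_same]
    have hpk : p ≤ p ^ k := Nat.le_self_pow hk.ne' p
    have hM : M ≠ 0 := by
      intro h; subst h; have := hp.two_le; omega
    refine ⟨⟨by omega, hp⟩, by omega, ?_⟩
    exact (Nat.le_log_iff_pow_le hp.one_lt hM).symm.mp (by omega)
  · rintro ⟨p, k⟩ hq
    simp only [Finset.mem_sigma, Finset.mem_filter, Finset.mem_range, Finset.mem_Icc] at hq
    obtain ⟨⟨hpM, hp⟩, hk1, hk2⟩ := hq
    simp [hp.pow_minFac (by omega : k ≠ 0), hp.factorization_pow]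
  · rintro n hn
    simp only [Finset.mem_filter, Finset.mem_range] at hn
    obtain ⟨hnM, hpp⟩ := hn
    obtain ⟨p, k, hp, hk, rfl⟩ := hpp
    rw [← Nat.prime_iff] at hp
    simp [hp.pow_minFac hk.ne', hp.factorization_pow]
  · rintro ⟨p, k⟩ hq
    simp only [Finset.mem_sigma, Finset.mem_filter, Finset.mem_range, Finset.mem_Icc] at hq
    obtain ⟨⟨hpM, hp⟩, hk1, hk2⟩ := hq
    simp [ArithmeticFunction.vonMangoldt_apply_pow (by omega : k ≠ 0),
      ArithmeticFunction.vonMangoldt_apply_prime hp]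

lemma log_floor_rpow (x : ℝ) (hx : 1 ≤ x) (m : ℕ) (hm : 0 < m) (p : ℕ) (hp : 1 < p) :
    Nat.log p (⌊x ^ ((1:ℝ)/m)⌋₊) = Nat.log p ⌊x⌋₊ / m := by
  have hx0 : (0:ℝ) ≤ x := by linarith
  have hm0 : ((m:ℝ)) ≠ 0 := Nat.cast_ne_zero.mpr hm.ne'
  have hxr : (1:ℝ) ≤ x ^ ((1:ℝ)/m) := by
    have := Real.rpow_le_rpow_of_exponent_le hx (by positivity : (0:ℝ) ≤ (1:ℝ)/m)
    simpa using this
  have hM1 : 1 ≤ ⌊x ^ ((1:ℝ)/m)⌋₊ := Nat.le_floor (by exact_mod_cast hxr)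
  have hN1 : 1 ≤ ⌊x⌋₊ := Nat.le_floor (by exact_mod_cast hx)
  have key : ∀ k : ℕ, k ≤ Nat.log p ⌊x ^ ((1:ℝ)/m)⌋₊ ↔ k ≤ Nat.log p ⌊x⌋₊ / m := by
    intro k
    rw [Nat.le_log_iff_pow_le hp (by omega), Nat.le_div_iff_mul_le hm,
      Nat.le_log_iff_pow_le hp (by omega),
      Nat.le_floor_iff (by positivity), Nat.le_floor_iff hx0]
    push_cast
    rw [pow_mul]
    constructor
    · intro hle
      calc ((p:ℝ)^k)^m ≤ (x ^ ((1:ℝ)/m))^m := pow_le_pow_left₀ (by positivity) hle m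
        _ = x := by
          rw [← Real.rpow_natCast (x ^ ((1:ℝ)/m)) m, ← Real.rpow_mul hx0,
            one_div, inv_mul_cancel₀ hm0, Real.rpow_one]
    · intro hle
      have h1 : ((p:ℝ)^k) = (((p:ℝ)^k)^m) ^ ((1:ℝ)/m) := by
        rw [← Real.rpow_natCast ((p:ℝ)^k) m, ← Real.rpow_mul (by positivity),
          mul_one_div, div_self hm0, Real.rpow_one]
      rw [h1]
      exact Real.rpow_le_rpow (by positivity) hle (by positivity)
  exact Nat.le_antisymm ((key _).mp le_rfl) ((key _).mpr le_rfl)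

lemma psi_le (x : ℝ) (hx : 1 ≤ x) :
    chebPsi x ≤ chebTheta x + chebPsi (x ^ ((1:ℝ)/2)) + chebPsi (x ^ ((1:ℝ)/3))
      + chebPsi (x ^ ((1:ℝ)/5)) := by
  have hx0 : (0:ℝ) ≤ x := by linarith
  have hN1 : 1 ≤ ⌊x⌋₊ := Nat.le_floor (by exact_mod_cast hx)
  have hpsi_m : ∀ m : ℕ, 0 < m → chebPsi (x ^ ((1:ℝ)/m))
      = ∑ p ∈ (Finset.range (⌊x⌋₊+1)).filter Nat.Prime,
          ((Nat.log p ⌊x⌋₊ / m : ℕ) : ℝ) * Real.log p := by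
    intro m hm
    have hMN : ⌊x ^ ((1:ℝ)/m)⌋₊ ≤ ⌊x⌋₊ := by
      apply Nat.floor_mono
      have hexp : (1:ℝ)/m ≤ 1 := by
        rw [div_le_one (by exact_mod_cast hm : (0:ℝ) < m)]
        exact Nat.one_le_cast.mpr hm
      have := Real.rpow_le_rpow_of_exponent_le hx hexp
      simpa using this
    have hsub : (Finset.range (⌊x ^ ((1:ℝ)/m)⌋₊+1)).filter Nat.Prime
        ⊆ (Finset.range (⌊x⌋₊+1)).filter Nat.Prime := by
      apply Finset.filter_subset_filter
      intro a ha
      simp only [Finset.mem_range] at ha ⊢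
      omega
    rw [chebPsi, psi_eq_aux]
    rw [Finset.sum_congr rfl (fun p hp => by
      rw [log_floor_rpow x hx m hm p (Finset.mem_filter.mp hp).2.one_lt])]
    refine Finset.sum_subset hsub ?_
    intro p hpN hpM
    have hp : p.Prime := (Finset.mem_filter.mp hpN).2
    have hgt : ⌊x ^ ((1:ℝ)/m)⌋₊ < p := by
      by_contra hle
      exact hpM (Finset.mem_filter.mpr ⟨Finset.mem_range.mpr (by omega), hp⟩)
    rw [← log_floor_rpow x hx m hm p hp.one_lt, Nat.log_of_lt hgt]
    simp
  have e2 := hpsi_m 2 (by norm_num)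
  have e3 := hpsi_m 3 (by norm_num)
  have e5 := hpsi_m 5 (by norm_num)
  norm_num at e2 e3 e5
  rw [chebPsi, chebTheta, psi_eq_aux, e2, e3, e5, ← Finset.sum_add_distrib,
    ← Finset.sum_add_distrib, ← Finset.sum_add_distrib]
  apply Finset.sum_le_sum
  intro p hp
  have hpp : p.Prime := (Finset.mem_filter.mp hp).2
  have hpN : p ≤ ⌊x⌋₊ := by
    have := (Finset.mem_filter.mp hp).1
    simp only [Finset.mem_range] at this
    omega
  have hL1 : 1 ≤ Nat.log p ⌊x⌋₊ :=
    (Nat.le_log_iff_pow_le hpp.one_lt (by omega)).symm.mp (by simpa using hpN)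
  have hlog0 : (0:ℝ) ≤ Real.log p :=
    Real.log_nonneg (by exact_mod_cast hpp.one_lt.le)
  have harith : (Nat.log p ⌊x⌋₊ : ℝ) ≤ 1 + (Nat.log p ⌊x⌋₊ / 2 : ℕ)
      + (Nat.log p ⌊x⌋₊ / 3 : ℕ) + (Nat.log p ⌊x⌋₊ / 5 : ℕ) := by
    have : Nat.log p ⌊x⌋₊ ≤ 1 + Nat.log p ⌊x⌋₊ / 2 + Nat.log p ⌊x⌋₊ / 3
        + Nat.log p ⌊x⌋₊ / 5 := by omega
    exact_mod_cast this
  calc (Nat.log p ⌊x⌋₊ : ℝ) * Real.log p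
      ≤ (1 + (Nat.log p ⌊x⌋₊ / 2 : ℕ) + (Nat.log p ⌊x⌋₊ / 3 : ℕ)
          + (Nat.log p ⌊x⌋₊ / 5 : ℕ)) * Real.log p :=
        mul_le_mul_of_nonneg_right harith hlog0
    _ = Real.log p + (Nat.log p ⌊x⌋₊ / 2 : ℕ) * Real.log p
        + (Nat.log p ⌊x⌋₊ / 3 : ℕ) * Real.log p
        + (Nat.log p ⌊x⌋₊ / 5 : ℕ) * Real.log p := by ring

theorem statement11 (u v : ℝ) (hu : 1 ≤ u) (huv : u < v)
    (c C : ℝ) (hc : 0 < c) (hC : 0 < C)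
    (h : ∀ x : ℝ, u ≤ x → x ≤ v →
      -c ≤ (x - chebPsi x) / Real.sqrt x ∧ (x - chebPsi x) / Real.sqrt x ≤ C)
    (c₀ : ℝ) (hc₀ : 0 < c₀) (hψ : ∀ x : ℝ, x > 0 → chebPsi x < c₀ * x)
    (hu2 : u ^ 2 < v) :
    ∀ x : ℝ, u ^ 2 ≤ x → x ≤ v →
      chebTheta x ≥ x - (C + 1) * x ^ ((1 : ℝ) / 2) - c₀ * x ^ ((1 : ℝ) / 3)
        - c * x ^ ((1 : ℝ) / 4) - c₀ * x ^ ((1 : ℝ) / 5) := by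
  intro x hx1 hx2
  have hu0 : (0:ℝ) < u := by linarith
  have hxu2 : (1:ℝ) ≤ u ^ 2 := by nlinarith
  have hx : (1:ℝ) ≤ x := le_trans hxu2 hx1
  have hx0 : (0:ℝ) < x := by linarith
  have hxu : u ≤ x := le_trans (by nlinarith) hx1
  have hv1 : (1:ℝ) ≤ v := by linarith
  have h1 := h x hxu hx2
  have hsx : 0 < Real.sqrt x := Real.sqrt_pos.mpr hx0
  have hpsix : x - chebPsi x ≤ C * Real.sqrt x := by
    have := (div_le_iff₀ hsx).mp h1.2
    linarith
  -- the point √x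
  have hyu : u ≤ Real.sqrt x := by
    have : Real.sqrt (u ^ 2) ≤ Real.sqrt x := Real.sqrt_le_sqrt hx1
    rwa [Real.sqrt_sq hu0.le] at this
  have hyv : Real.sqrt x ≤ v :=
    (Real.sqrt_le_left (by linarith)).mpr (by nlinarith)
  have h2 := h (Real.sqrt x) hyu hyv
  have hssx : 0 < Real.sqrt (Real.sqrt x) := Real.sqrt_pos.mpr hsx
  have hpsisx : chebPsi (Real.sqrt x) ≤ Real.sqrt x + c * Real.sqrt (Real.sqrt x) := by
    have := (le_div_iff₀ hssx).mp h2.1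
    linarith
  have h12 : x ^ ((1:ℝ)/2) = Real.sqrt x := (Real.sqrt_eq_rpow x).symm
  have h14 : Real.sqrt (Real.sqrt x) = x ^ ((1:ℝ)/4) := by
    rw [Real.sqrt_eq_rpow, Real.sqrt_eq_rpow, ← Real.rpow_mul hx0.le]
    norm_num
  have hψ3 := hψ (x ^ ((1:ℝ)/3)) (by positivity)
  have hψ5 := hψ (x ^ ((1:ℝ)/5)) (by positivity)
  have hkey := psi_le x hx
  rw [h12] at hkey
  rw [h12, ← h14]
  linarith
end

section
/- Let v ≥ 10⁴ and c, C > 0 be reals such that −c ≤ (x − ψ(x))/√x ≤ C for all x ∈ [100, v], and assume ψ(x) ≤ 1.03883·x for all x > 0. Let k ≥ 0 be an integer and let b be a real with max(10⁴, e^{2k}) ≤ e^b ≤ v. Then for all x ∈ [e^b, v] one has θ(x) ≥ x − 𝒞_{b,k}·x/(log x)^k, where 𝒞_{b,k} = b^k·( (C + 1)·e^{−b/2} + 1.03883·e^{−2b/3} + c·e^{−3b/4} + 1.03883·e^{−4b/5} ). -/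
lemma count_div (A : ℕ) : A ≤ 1 + A / 2 + A / 3 + A / 5 := by omega

lemma filter_card (N A d : ℕ) (hd : 0 < d) (hAN : A ≤ N) :
    ((Finset.Icc 1 N).filter (fun j => d * j ≤ A)).card = A / d := by
  have he : (Finset.Icc 1 N).filter (fun j => d * j ≤ A) = Finset.Icc 1 (A / d) := by
    ext j
    simp only [Finset.mem_filter, Finset.mem_Icc]
    constructor
    · rintro ⟨⟨h1, _⟩, h2⟩
      exact ⟨h1, (Nat.le_div_iff_mul_le hd).2 (by rwa [mul_comm])⟩
    · rintro ⟨h1, h2⟩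
      have hj : j * d ≤ A := (Nat.le_div_iff_mul_le hd).1 h2
      have hjN : j ≤ N := le_trans (le_trans h2 (Nat.div_le_self A d)) hAN
      exact ⟨⟨h1, hjN⟩, by rwa [mul_comm]⟩
  rw [he, Nat.card_Icc, Nat.add_sub_cancel]

lemma innerSum' (N A d : ℕ) (hd : 0 < d) (hAN : A ≤ N) (L : ℝ) :
    ∑ j ∈ Finset.Icc 1 N, (if d * j ≤ A then L else 0) = (A / d : ℕ) * L := by
  rw [← Finset.sum_filter, Finset.sum_const, filter_card N A d hd hAN, nsmul_eq_mul]

lemma psi_sum_eq (M N : ℕ) (hMN : M ≤ N) :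
    ∑ n ∈ Finset.range (M + 1), ArithmeticFunction.vonMangoldt n =
    ∑ p ∈ (Finset.range (N + 1)).filter Nat.Prime,
      ∑ j ∈ Finset.Icc 1 N, (if p ^ j ≤ M then Real.log p else 0) := by
  have hL : ∑ n ∈ Finset.range (M + 1), ArithmeticFunction.vonMangoldt n
      = ∑ n ∈ (Finset.range (M + 1)).filter IsPrimePow, Real.log n.minFac := by
    rw [Finset.sum_filter]
    exact Finset.sum_congr rfl fun n _ => ArithmeticFunction.vonMangoldt_apply
  have hR : ∑ q ∈ (((Finset.range (N + 1)).filter Nat.Prime) ×ˢ Finset.Icc 1 N).filter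
          (fun q => q.1 ^ q.2 ≤ M), Real.log q.1
      = ∑ p ∈ (Finset.range (N + 1)).filter Nat.Prime,
        ∑ j ∈ Finset.Icc 1 N, (if p ^ j ≤ M then Real.log p else 0) := by
    rw [Finset.sum_filter, Finset.sum_product]
  rw [hL, ← hR]
  refine Finset.sum_nbij' (fun n => (n.minFac, Nat.log n.minFac n))
    (fun q => q.1 ^ q.2) ?_ ?_ ?_ ?_ ?_
  · intro n hn
    simp only [Finset.mem_filter, Finset.mem_range] at hn
    obtain ⟨hnM, hpp⟩ := hn
    obtain ⟨p, a, hp, ha, rfl⟩ := (isPrimePow_nat_iff _).1 hpp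
    rw [hp.pow_minFac ha.ne', Nat.log_pow hp.one_lt]
    simp only [Finset.mem_filter, Finset.mem_product, Finset.mem_range, Finset.mem_Icc]
    have h1 : p ≤ p ^ a := Nat.le_self_pow ha.ne' p
    have h2 : a < 2 ^ a := Nat.lt_two_pow_self (n := a)
    have h3 : 2 ^ a ≤ p ^ a := Nat.pow_le_pow_left hp.two_le a
    exact ⟨⟨⟨by omega, hp⟩, ha, by omega⟩, by omega⟩
  · intro q hq
    simp only [Finset.mem_filter, Finset.mem_product, Finset.mem_range, Finset.mem_Icc] at hq
    obtain ⟨⟨⟨_, hp⟩, hj1, _⟩, hle⟩ := hq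
    simp only [Finset.mem_filter, Finset.mem_range]
    exact ⟨by omega, hp.isPrimePow.pow (by omega)⟩
  · intro n hn
    simp only [Finset.mem_filter, Finset.mem_range] at hn
    obtain ⟨p, a, hp, ha, rfl⟩ := (isPrimePow_nat_iff _).1 hn.2
    dsimp only
    rw [hp.pow_minFac ha.ne', Nat.log_pow hp.one_lt]
  · intro q hq
    simp only [Finset.mem_filter, Finset.mem_product, Finset.mem_range, Finset.mem_Icc] at hq
    obtain ⟨⟨⟨_, hp⟩, hj1, _⟩, _⟩ := hq
    rw [hp.pow_minFac (by omega : q.2 ≠ 0), Nat.log_pow hp.one_lt]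
  · intro n hn
    simp only [Finset.mem_filter, Finset.mem_range] at hn
    rfl


lemma le_rpow_inv_iff (x y : ℝ) (hx : 0 < x) (hy : 0 ≤ y) (d : ℕ) (hd : 0 < d) :
    y ≤ x ^ ((1:ℝ)/d) ↔ y ^ d ≤ x := by
  have hd' : (d:ℝ) ≠ 0 := Nat.cast_ne_zero.2 hd.ne'
  have h1 : (x ^ ((1:ℝ)/d)) ^ d = x := by
    rw [← Real.rpow_natCast (x ^ ((1:ℝ)/d)) d, ← Real.rpow_mul hx.le]
    rw [one_div_mul_cancel hd', Real.rpow_one]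
  constructor
  · intro hle
    calc y ^ d ≤ (x ^ ((1:ℝ)/d)) ^ d := pow_le_pow_left₀ hy hle d
    _ = x := h1
  · intro hle
    have h2 : (y ^ d) ^ ((1:ℝ)/d) ≤ x ^ ((1:ℝ)/d) :=
      Real.rpow_le_rpow (pow_nonneg hy d) hle (by positivity)
    rwa [← Real.rpow_natCast y d, ← Real.rpow_mul hy, mul_one_div, div_self hd',
      Real.rpow_one] at h2

lemma cond_iff (x : ℝ) (hx1 : 1 ≤ x) (p j d : ℕ) (hp : 2 ≤ p) (hd : 0 < d) :
    p ^ j ≤ ⌊x ^ ((1:ℝ)/d)⌋₊ ↔ d * j ≤ Nat.log p ⌊x⌋₊ := by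
  have hx0 : (0:ℝ) < x := by linarith
  have hN0 : ⌊x⌋₊ ≠ 0 := by
    have : (1:ℕ) ≤ ⌊x⌋₊ := Nat.le_floor (by exact_mod_cast hx1)
    omega
  rw [Nat.le_floor_iff (Real.rpow_nonneg hx0.le _),
    le_rpow_inv_iff x _ hx0 (by positivity) d hd]
  rw [show (((p ^ j : ℕ):ℝ)) ^ d = ((p ^ (j * d) : ℕ) : ℝ) by push_cast; rw [pow_mul],
    ← Nat.le_floor_iff hx0.le, ← Nat.le_log_iff_pow_le hp hN0, mul_comm]

lemma psi_rpow_eq (x : ℝ) (hx1 : 1 ≤ x) (d : ℕ) (hd : 0 < d) :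
    chebPsi (x ^ ((1:ℝ)/d)) = ∑ p ∈ (Finset.range (⌊x⌋₊ + 1)).filter Nat.Prime,
      ((Nat.log p ⌊x⌋₊ / d : ℕ) : ℝ) * Real.log p := by
  have hMN : ⌊x ^ ((1:ℝ)/d)⌋₊ ≤ ⌊x⌋₊ := by
    apply Nat.floor_mono
    calc x ^ ((1:ℝ)/d) ≤ x ^ (1:ℝ) := by
          apply Real.rpow_le_rpow_of_exponent_le hx1
          rw [div_le_one (by exact_mod_cast hd)]
          exact_mod_cast hd
    _ = x := Real.rpow_one x
  rw [chebPsi, psi_sum_eq _ ⌊x⌋₊ hMN]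
  refine Finset.sum_congr rfl fun p hp => ?_
  simp only [Finset.mem_filter, Finset.mem_range] at hp
  have hp2 : 2 ≤ p := hp.2.two_le
  rw [Finset.sum_congr rfl (fun j _ => by
    simp only [cond_iff x hx1 p j d hp2 hd] :
    ∀ j ∈ Finset.Icc 1 ⌊x⌋₊, (if p ^ j ≤ ⌊x ^ ((1:ℝ)/d)⌋₊ then Real.log p else 0)
      = (if d * j ≤ Nat.log p ⌊x⌋₊ then Real.log p else 0))]
  exact innerSum' _ _ _ hd (Nat.log_le_self p ⌊x⌋₊) _

lemma key_ineq (x : ℝ) (hx1 : 1 ≤ x) :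
    chebPsi x ≤ chebTheta x + chebPsi (x ^ ((1:ℝ)/2)) + chebPsi (x ^ ((1:ℝ)/3))
      + chebPsi (x ^ ((1:ℝ)/5)) := by
  have h1 : chebPsi x = ∑ p ∈ (Finset.range (⌊x⌋₊ + 1)).filter Nat.Prime,
      ((Nat.log p ⌊x⌋₊ : ℕ) : ℝ) * Real.log p := by
    have := psi_rpow_eq x hx1 1 one_pos
    simpa [Real.rpow_one] using this
  have e2 : chebPsi (x ^ ((1:ℝ)/2)) = ∑ p ∈ (Finset.range (⌊x⌋₊ + 1)).filter Nat.Prime,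
      ((Nat.log p ⌊x⌋₊ / 2 : ℕ) : ℝ) * Real.log p := by
    rw [show ((1:ℝ)/2) = (1:ℝ)/((2:ℕ):ℝ) by norm_num]; exact psi_rpow_eq x hx1 2 (by norm_num)
  have e3 : chebPsi (x ^ ((1:ℝ)/3)) = ∑ p ∈ (Finset.range (⌊x⌋₊ + 1)).filter Nat.Prime,
      ((Nat.log p ⌊x⌋₊ / 3 : ℕ) : ℝ) * Real.log p := by
    rw [show ((1:ℝ)/3) = (1:ℝ)/((3:ℕ):ℝ) by norm_num]; exact psi_rpow_eq x hx1 3 (by norm_num)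
  have e5 : chebPsi (x ^ ((1:ℝ)/5)) = ∑ p ∈ (Finset.range (⌊x⌋₊ + 1)).filter Nat.Prime,
      ((Nat.log p ⌊x⌋₊ / 5 : ℕ) : ℝ) * Real.log p := by
    rw [show ((1:ℝ)/5) = (1:ℝ)/((5:ℕ):ℝ) by norm_num]; exact psi_rpow_eq x hx1 5 (by norm_num)
  rw [h1, e2, e3, e5, chebTheta]
  rw [← Finset.sum_add_distrib, ← Finset.sum_add_distrib, ← Finset.sum_add_distrib]
  refine Finset.sum_le_sum fun p hp => ?_
  simp only [Finset.mem_filter, Finset.mem_range] at hp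
  have hL : 0 ≤ Real.log p := Real.log_nonneg (by exact_mod_cast hp.2.one_lt.le)
  set A := Nat.log p ⌊x⌋₊ with hA
  have hcount : (A : ℝ) ≤ 1 + (A / 2 : ℕ) + (A / 3 : ℕ) + (A / 5 : ℕ) := by
    have : A ≤ 1 + A / 2 + A / 3 + A / 5 := by omega
    exact_mod_cast this
  nlinarith [mul_le_mul_of_nonneg_right hcount hL]


lemma exp_term (k : ℕ) (b t α : ℝ) (h2k : 2*(k:ℝ) ≤ b) (hbt : b ≤ t) (hα : 1/2 ≤ α)
    (hb0 : 0 < b) : t ^ k * Real.exp (-(α * t)) ≤ b ^ k * Real.exp (-(α * b)) := by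
  have ht0 : 0 < t := lt_of_lt_of_le hb0 hbt
  have h1 : t ≤ b * Real.exp ((t - b)/b) := by
    have he := Real.add_one_le_exp ((t-b)/b)
    have : b * ((t-b)/b + 1) ≤ b * Real.exp ((t-b)/b) :=
      mul_le_mul_of_nonneg_left he hb0.le
    calc t = b * ((t-b)/b + 1) := by field_simp; ring
    _ ≤ b * Real.exp ((t-b)/b) := this
  have h2 : t^k ≤ b^k * Real.exp ((k:ℝ) * ((t-b)/b)) := by
    calc t^k ≤ (b * Real.exp ((t-b)/b))^k := pow_le_pow_left₀ ht0.le h1 k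
    _ = b^k * (Real.exp ((t-b)/b))^k := mul_pow _ _ _
    _ = b^k * Real.exp ((k:ℝ) * ((t-b)/b)) := by rw [← Real.exp_nat_mul]
  have h3 : (k:ℝ) * ((t-b)/b) ≤ α * (t - b) := by
    have hk : (k:ℝ)/b ≤ α := by
      refine le_trans ?_ hα
      rw [div_le_div_iff₀ hb0 (by norm_num : (0:ℝ) < 2)]
      linarith
    have htb : 0 ≤ t - b := by linarith
    calc (k:ℝ) * ((t-b)/b) = ((k:ℝ)/b) * (t-b) := by ring
    _ ≤ α * (t-b) := mul_le_mul_of_nonneg_right hk htb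
  calc t^k * Real.exp (-(α*t))
      ≤ (b^k * Real.exp ((k:ℝ) * ((t-b)/b))) * Real.exp (-(α*t)) :=
        mul_le_mul_of_nonneg_right h2 (Real.exp_pos _).le
  _ ≤ (b^k * Real.exp (α * (t-b))) * Real.exp (-(α*t)) := by
        have he := Real.exp_le_exp.2 h3
        have hbk : (0:ℝ) ≤ b^k := (pow_pos hb0 k).le
        exact mul_le_mul_of_nonneg_right (mul_le_mul_of_nonneg_left he hbk)
          (Real.exp_pos _).le
  _ = b^k * Real.exp (-(α*b)) := by
        rw [mul_assoc, ← Real.exp_add]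
        congr 2
        ring

lemma term_bound (k : ℕ) (b t α β : ℝ) (hab : α + β = 1) (h2k : 2*(k:ℝ) ≤ b) (hbt : b ≤ t)
    (hα : 1/2 ≤ α) (hb0 : 0 < b) :
    Real.exp (t * β) * t ^ k ≤ b ^ k * Real.exp (-(α * b)) * Real.exp t := by
  have h := exp_term k b t α h2k hbt hα hb0
  have he : Real.exp (t * β) = Real.exp (-(α * t)) * Real.exp t := by
    rw [← Real.exp_add]
    congr 1
    nlinarith [hab]
  have hrw : Real.exp (t * β) * t ^ k = (t ^ k * Real.exp (-(α * t))) * Real.exp t := by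
    rw [he]; ring
  rw [hrw]
  exact mul_le_mul_of_nonneg_right h (Real.exp_pos t).le

theorem statement12 (v : ℝ) (hv : v ≥ 10 ^ 4) (c C : ℝ) (hc : 0 < c) (hC : 0 < C)
    (h : ∀ x : ℝ, 100 ≤ x → x ≤ v →
      -c ≤ (x - chebPsi x) / Real.sqrt x ∧ (x - chebPsi x) / Real.sqrt x ≤ C)
    (hψ : ∀ x : ℝ, x > 0 → chebPsi x ≤ 1.03883 * x)
    (k : ℕ) (b : ℝ)
    (hb : max (10 ^ 4 : ℝ) (Real.exp (2 * k)) ≤ Real.exp b) (hbv : Real.exp b ≤ v) :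
    ∀ x : ℝ, Real.exp b ≤ x → x ≤ v →
      chebTheta x ≥ x -
        (b ^ k * ((C + 1) * Real.exp (-b / 2) + 1.03883 * Real.exp (-2 * b / 3)
          + c * Real.exp (-3 * b / 4) + 1.03883 * Real.exp (-4 * b / 5))) *
          x / (Real.log x) ^ k := by
  intro x hxb hxv
  have hx4 : (10 ^ 4 : ℝ) ≤ x := le_trans (le_trans (le_max_left _ _) hb) hxb
  have hx1 : (1:ℝ) ≤ x := by norm_num at hx4 ⊢; linarith
  have hx0 : (0:ℝ) < x := by linarith
  have hb0 : 0 < b := by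
    by_contra hneg
    push_neg at hneg
    have h1 : Real.exp b ≤ 1 := by
      rw [← Real.exp_zero]
      exact Real.exp_le_exp.2 (by linarith)
    have h2 : (10:ℝ)^4 ≤ Real.exp b := le_trans (le_max_left _ _) hb
    norm_num at h2
    linarith
  have h2k : 2 * (k:ℝ) ≤ b := Real.exp_le_exp.1 (le_trans (le_max_right _ _) hb)
  have hbt : b ≤ Real.log x := by
    rw [← Real.log_exp b]
    exact Real.log_le_log (Real.exp_pos b) hxb
  set t := Real.log x with ht
  have ht0 : 0 < t := lt_of_lt_of_le hb0 hbt
  have htk : (0:ℝ) < t ^ k := pow_pos ht0 k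
  have hxe : x = Real.exp t := (Real.exp_log hx0).symm
  -- psi bounds
  have hx100 : (100:ℝ) ≤ x := by norm_num at hx4 ⊢; linarith
  have hsx0 : 0 < Real.sqrt x := Real.sqrt_pos.2 hx0
  have hψx : x - C * Real.sqrt x ≤ chebPsi x := by
    obtain ⟨-, h2⟩ := h x hx100 hxv
    have := (div_le_iff₀ hsx0).1 h2
    linarith
  have h100s : (100:ℝ) ≤ Real.sqrt x := by
    rw [show (100:ℝ) = Real.sqrt (10^4) by
      rw [show (10:ℝ)^4 = 100^2 by norm_num, Real.sqrt_sq (by norm_num)]]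
    exact Real.sqrt_le_sqrt hx4
  have hψ2 : chebPsi (Real.sqrt x) ≤ Real.sqrt x + c * Real.sqrt (Real.sqrt x) := by
    obtain ⟨hlo, -⟩ := h (Real.sqrt x) h100s (by
      have hsx : Real.sqrt x ≤ x := Real.sqrt_le_iff.2 ⟨hx0.le, by nlinarith⟩
      linarith)
    have hss : 0 < Real.sqrt (Real.sqrt x) := Real.sqrt_pos.2 hsx0
    have := (le_div_iff₀ hss).1 hlo
    linarith
  have hψ3 : chebPsi (x ^ ((1:ℝ)/3)) ≤ 1.03883 * x ^ ((1:ℝ)/3) :=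
    hψ _ (Real.rpow_pos_of_pos hx0 _)
  have hψ5 : chebPsi (x ^ ((1:ℝ)/5)) ≤ 1.03883 * x ^ ((1:ℝ)/5) :=
    hψ _ (Real.rpow_pos_of_pos hx0 _)
  -- rewrite sqrt as rpow
  have hsq : Real.sqrt x = x ^ ((1:ℝ)/2) := Real.sqrt_eq_rpow x
  have h4eq : Real.sqrt (x ^ ((1:ℝ)/2)) = x ^ ((1:ℝ)/4) := by
    rw [Real.sqrt_eq_rpow, ← Real.rpow_mul hx0.le]
    norm_num
  rw [hsq] at hψx hψ2
  rw [h4eq] at hψ2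
  have hkey := key_ineq x hx1
  -- the big bound
  have hrw1 : x ^ ((1:ℝ)/2) = Real.exp (t * (1/2)) := Real.rpow_def_of_pos hx0 _
  have hrw3 : x ^ ((1:ℝ)/3) = Real.exp (t * (1/3)) := Real.rpow_def_of_pos hx0 _
  have hrw4 : x ^ ((1:ℝ)/4) = Real.exp (t * (1/4)) := Real.rpow_def_of_pos hx0 _
  have hrw5 : x ^ ((1:ℝ)/5) = Real.exp (t * (1/5)) := Real.rpow_def_of_pos hx0 _
  have T2 := term_bound k b t (1/2) (1/2) (by norm_num) h2k hbt (le_refl _) hb0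
  have T3 := term_bound k b t (2/3) (1/3) (by norm_num) h2k hbt (by norm_num) hb0
  have T4 := term_bound k b t (3/4) (1/4) (by norm_num) h2k hbt (by norm_num) hb0
  have T5 := term_bound k b t (4/5) (1/5) (by norm_num) h2k hbt (by norm_num) hb0
  have hBig : (C+1) * x ^ ((1:ℝ)/2) + c * x ^ ((1:ℝ)/4) + 1.03883 * x ^ ((1:ℝ)/3)
      + 1.03883 * x ^ ((1:ℝ)/5)
      ≤ (b ^ k * ((C + 1) * Real.exp (-b / 2) + 1.03883 * Real.exp (-2 * b / 3)
          + c * Real.exp (-3 * b / 4) + 1.03883 * Real.exp (-4 * b / 5))) *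
          x / t ^ k := by
    rw [le_div_iff₀ htk]
    rw [show (-b/2 : ℝ) = -(1/2*b) by ring, show (-2*b/3 : ℝ) = -(2/3*b) by ring,
      show (-3*b/4 : ℝ) = -(3/4*b) by ring, show (-4*b/5 : ℝ) = -(4/5*b) by ring]
    rw [hrw1, hrw3, hrw4, hrw5, hxe]
    have B2 := mul_le_mul_of_nonneg_left T2 (by linarith : (0:ℝ) ≤ C + 1)
    have B3 := mul_le_mul_of_nonneg_left T3 (by norm_num : (0:ℝ) ≤ 1.03883)
    have B4 := mul_le_mul_of_nonneg_left T4 hc.le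
    have B5 := mul_le_mul_of_nonneg_left T5 (by norm_num : (0:ℝ) ≤ 1.03883)
    linarith [B2, B3, B4, B5]
  linarith [hkey, hψx, hψ2, hψ3, hψ5, hBig]
end

section
/- Let k ∈ {1,2,3,4,5} and let 0 < a < b be reals with a > e^{k+1}. Let p_n denote the n-th prime, and let n₀ and n₁ be the indices of the smallest primes greater than a and greater than b, respectively. Define 𝒟_k(a,b) = max_{n₀ ≤ n ≤ n₁} (log p_n)^k · (p_n − θ(p_{n−1})) / p_n. If 𝒟_k(a,b) < (k+1)^{k+1}, then θ(x) ≥ x − 𝒟_k(a,b)·x/(log x)^k for all real x with a ≤ x ≤ b. -/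
/-- The `n`-th prime number, indexed so that `nthPrime 1 = 2`, `nthPrime 2 = 3`, … -/
noncomputable def nthPrime (n : ℕ) : ℕ := Nat.nth Nat.Prime (n - 1)

private lemma key_bernoulli (k : ℕ) (u : ℝ) (hu : (k : ℝ) + 1 ≤ u) :
    ((k : ℝ) + 1) ^ (k + 1) * (u - k) ≤ u ^ (k + 1) := by
  have hk1 : (0 : ℝ) < (k : ℝ) + 1 := by positivity
  set v := u / ((k : ℝ) + 1) with hv
  have hv1 : 1 ≤ v := (one_le_div hk1).mpr hu
  have hb : 1 + ((k + 1 : ℕ) : ℝ) * (v - 1) ≤ (1 + (v - 1)) ^ (k + 1) :=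
    one_add_mul_le_pow (by linarith) (k + 1)
  have huv : u = ((k : ℝ) + 1) * v := by rw [hv]; field_simp [hk1.ne']
  have h2 := mul_le_mul_of_nonneg_left hb (le_of_lt (pow_pos hk1 (k + 1)))
  calc ((k : ℝ) + 1) ^ (k + 1) * (u - k)
      = ((k : ℝ) + 1) ^ (k + 1) * (1 + ((k + 1 : ℕ) : ℝ) * (v - 1)) := by
        rw [huv]; push_cast; ring
    _ ≤ ((k : ℝ) + 1) ^ (k + 1) * (1 + (v - 1)) ^ (k + 1) := h2
    _ = (((k : ℝ) + 1) * v) ^ (k + 1) := by rw [← mul_pow]; ring_nf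
    _ = u ^ (k + 1) := by rw [← huv]

private lemma mono_f (k : ℕ) (hk1 : 1 ≤ k) (D : ℝ) (hDk : D < ((k : ℝ) + 1) ^ (k + 1)) :
    MonotoneOn (fun t : ℝ => t - D * t / Real.log t ^ k)
      (Set.Ici (Real.exp ((k : ℝ) + 1))) := by
  set c := Real.exp ((k : ℝ) + 1) with hc
  have hc0 : 0 < c := Real.exp_pos _
  have hlog : ∀ t : ℝ, c ≤ t → (k : ℝ) + 1 ≤ Real.log t := by
    intro t ht
    have := Real.log_le_log hc0 ht
    rwa [hc, Real.log_exp] at this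
  have hderiv : ∀ t ∈ Set.Ici c, HasDerivAt (fun t : ℝ => t - D * t / Real.log t ^ k)
      (1 - D * ((1 * Real.log t ^ k - t * (↑k * Real.log t ^ (k - 1) * t⁻¹)) /
        (Real.log t ^ k) ^ 2)) t := by
    intro t ht
    have ht0 : 0 < t := lt_of_lt_of_le hc0 ht
    have hu : (k : ℝ) + 1 ≤ Real.log t := hlog t ht
    have hL : 0 < Real.log t ^ k := pow_pos (by linarith) k
    have h1 := Real.hasDerivAt_log (ne_of_gt ht0)
    have h2 := h1.pow k
    have h3 := (hasDerivAt_id t).div h2 (ne_of_gt hL)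
    have h4 := (hasDerivAt_id t).sub (h3.const_mul D)
    have heq : (fun t : ℝ => t - D * (t / Real.log t ^ k)) =
        (fun t : ℝ => t - D * t / Real.log t ^ k) := by
      funext s; rw [mul_div_assoc]
    rw [← heq]; exact h4
  apply monotoneOn_of_deriv_nonneg (convex_Ici c)
  · exact fun t ht => (hderiv t ht).continuousAt.continuousWithinAt
  · intro t ht
    rw [interior_Ici] at ht
    exact ((hderiv t (Set.Ioi_subset_Ici_self ht)).differentiableAt).differentiableWithinAt
  · intro t ht
    rw [interior_Ici] at ht
    have ht' : t ∈ Set.Ici c := Set.Ioi_subset_Ici_self ht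
    have ht0 : 0 < t := lt_of_lt_of_le hc0 ht'
    have hu : (k : ℝ) + 1 ≤ Real.log t := hlog t ht'
    rw [(hderiv t ht').deriv]
    set u := Real.log t with hudef
    have hu0 : 0 < u := by linarith
    have hsimp : t * (↑k * u ^ (k - 1) * t⁻¹) = ↑k * u ^ (k - 1) := by
      field_simp
    rw [one_mul, hsimp, sub_nonneg, ← mul_div_assoc]
    rw [div_le_one (by positivity)]
    -- goal : D * (u ^ k - ↑k * u ^ (k - 1)) ≤ (u ^ k) ^ 2
    have hfac : u ^ k - ↑k * u ^ (k - 1) = u ^ (k - 1) * (u - k) := by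
      have hk : u ^ k = u ^ (k - 1) * u := by
        rw [← pow_succ]; congr 1; omega
      rw [hk]; ring
    have hfacpos : 0 ≤ u ^ (k - 1) * (u - k) := by
      apply mul_nonneg (pow_nonneg hu0.le _); linarith
    rw [hfac]
    rcases le_or_gt D 0 with hD0 | hD0
    · have : D * (u ^ (k - 1) * (u - k)) ≤ 0 := mul_nonpos_of_nonpos_of_nonneg hD0 hfacpos
      calc D * (u ^ (k - 1) * (u - k)) ≤ 0 := this
        _ ≤ (u ^ k) ^ 2 := by positivity
    · have hkey := key_bernoulli k u hu
      calc D * (u ^ (k - 1) * (u - k))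
          ≤ ((k : ℝ) + 1) ^ (k + 1) * (u ^ (k - 1) * (u - k)) :=
            mul_le_mul_of_nonneg_right hDk.le hfacpos
        _ = (((k : ℝ) + 1) ^ (k + 1) * (u - k)) * u ^ (k - 1) := by ring
        _ ≤ u ^ (k + 1) * u ^ (k - 1) :=
            mul_le_mul_of_nonneg_right hkey (pow_nonneg hu0.le _)
        _ = (u ^ k) ^ 2 := by
            rw [← pow_add, ← pow_mul]; congr 1; omega

theorem statement13 (k : ℕ) (hk1 : 1 ≤ k) (hk5 : k ≤ 5)
    (a b : ℝ) (ha : 0 < a) (hab : a < b) (hae : Real.exp ((k : ℝ) + 1) < a)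
    (n₀ n₁ : ℕ)
    (hn₀ : a < (nthPrime n₀ : ℝ) ∧ ∀ m : ℕ, a < (nthPrime m : ℝ) → n₀ ≤ m)
    (hn₁ : b < (nthPrime n₁ : ℝ) ∧ ∀ m : ℕ, b < (nthPrime m : ℝ) → n₁ ≤ m)
    (D : ℝ)
    (hD : D = Finset.sup' (Finset.Icc n₀ n₁)
      (Finset.nonempty_Icc.mpr (hn₀.2 n₁ (lt_trans hab hn₁.1)))
      (fun n => (Real.log (nthPrime n)) ^ k *
        ((nthPrime n : ℝ) - chebTheta (nthPrime (n - 1))) / (nthPrime n)))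
    (hDk : D < ((k : ℝ) + 1) ^ (k + 1)) :
    ∀ x : ℝ, a ≤ x → x ≤ b → chebTheta x ≥ x - D * x / (Real.log x) ^ k := by
  classical
  intro x hax hxb
  have hinf := Nat.infinite_setOf_prime
  have hcx : Real.exp ((k : ℝ) + 1) < x := lt_of_lt_of_le hae hax
  have hexp3 : (3 : ℝ) ≤ Real.exp ((k : ℝ) + 1) := by
    have h1 := Real.add_one_lt_exp (x := (k : ℝ) + 1) (by positivity)
    have hk : (1 : ℝ) ≤ (k : ℝ) := by exact_mod_cast hk1
    linarith
  have hx2 : (2 : ℝ) < x := by linarith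
  have hx0 : 0 < x := by linarith
  have hnth0 : Nat.nth Nat.Prime 0 = 2 := by
    have hcount : Nat.count Nat.Prime 2 = 0 := by decide
    simpa [hcount] using Nat.nth_count Nat.prime_two
  have hex : ∃ m : ℕ, x < (Nat.nth Nat.Prime m : ℝ) := by
    refine ⟨⌊x⌋₊ + 1, ?_⟩
    have h1 : (⌊x⌋₊ + 1 : ℕ) ≤ Nat.nth Nat.Prime (⌊x⌋₊ + 1) :=
      (Nat.nth_strictMono hinf).le_apply
    have h2 := Nat.lt_floor_add_one x
    have : ((⌊x⌋₊ + 1 : ℕ) : ℝ) ≤ (Nat.nth Nat.Prime (⌊x⌋₊ + 1) : ℝ) := by exact_mod_cast h1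
    push_cast at this
    linarith
  set m := Nat.find hex with hm
  have hxm : x < (Nat.nth Nat.Prime m : ℝ) := Nat.find_spec hex
  have hmin : ∀ j, j < m → (Nat.nth Nat.Prime j : ℝ) ≤ x := by
    intro j hj
    exact not_lt.1 (Nat.find_min hex hj)
  have hm1 : 1 ≤ m := by
    by_contra h
    push_neg at h
    have hm0 : m = 0 := by omega
    rw [hm0, hnth0] at hxm
    norm_num at hxm
    linarith
  set q := Nat.nth Nat.Prime (m - 1) with hq
  have hqx : (q : ℝ) ≤ x := hmin (m - 1) (by omega)
  -- chebTheta x = chebTheta q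
  have hsets : (Finset.range (⌊x⌋₊ + 1)).filter Nat.Prime =
      (Finset.range (q + 1)).filter Nat.Prime := by
    ext p
    simp only [Finset.mem_filter, Finset.mem_range, Nat.lt_succ_iff]
    constructor
    · rintro ⟨hple, hp⟩
      refine ⟨?_, hp⟩
      have hpx : (p : ℝ) ≤ x :=
        le_trans (by exact_mod_cast hple) (Nat.floor_le hx0.le)
      have hpP : p < Nat.nth Nat.Prime m := by
        by_contra hcon
        push_neg at hcon
        have : (Nat.nth Nat.Prime m : ℝ) ≤ x :=
          le_trans (by exact_mod_cast hcon) hpx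
        linarith
      have hidx : Nat.count Nat.Prime p < m := by
        rw [← Nat.nth_count hp] at hpP
        exact (Nat.nth_lt_nth hinf).1 hpP
      calc p = Nat.nth Nat.Prime (Nat.count Nat.Prime p) := (Nat.nth_count hp).symm
        _ ≤ q := (Nat.nth_le_nth hinf).2 (by omega)
    · rintro ⟨hpq, hp⟩
      have hqfl : q ≤ ⌊x⌋₊ := Nat.le_floor hqx
      exact ⟨by omega, hp⟩
  have htheta : chebTheta x = chebTheta (q : ℝ) := by
    unfold chebTheta
    rw [Nat.floor_natCast, hsets]
  -- membership in Icc
  have hP1 : nthPrime (m + 1) = Nat.nth Nat.Prime m := by simp [nthPrime]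
  have hP2 : nthPrime ((m + 1) - 1) = q := by simp [nthPrime, hq]
  have hmem : m + 1 ∈ Finset.Icc n₀ n₁ := by
    rw [Finset.mem_Icc]
    constructor
    · apply hn₀.2
      rw [hP1]
      linarith
    · have hn11 : 1 ≤ n₁ := by
        by_contra h
        push_neg at h
        have h0 : n₁ = 0 := by omega
        have hb1 := hn₁.1
        rw [h0] at hb1
        have : nthPrime 0 = 2 := by simp [nthPrime, hnth0]
        rw [this] at hb1
        norm_num at hb1
        linarith
      have hmn : m ≤ n₁ - 1 := by
        by_contra h
        push_neg at h
        have h1 := hmin (n₁ - 1) h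
        have h2 := hn₁.1
        have h3 : nthPrime n₁ = Nat.nth Nat.Prime (n₁ - 1) := rfl
        rw [h3] at h2
        linarith
      omega
  have hsup : (Real.log (nthPrime (m + 1))) ^ k *
      ((nthPrime (m + 1) : ℝ) - chebTheta (nthPrime ((m + 1) - 1))) / (nthPrime (m + 1)) ≤ D := by
    rw [hD]
    exact Finset.le_sup' (fun n => (Real.log (nthPrime n)) ^ k *
      ((nthPrime n : ℝ) - chebTheta (nthPrime (n - 1))) / (nthPrime n)) hmem
  rw [hP1, hP2] at hsup
  set P : ℝ := (Nat.nth Nat.Prime m : ℝ) with hPdef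
  have hxP : x < P := hxm
  have hP0 : 0 < P := by linarith
  have hlogP : (k : ℝ) + 1 ≤ Real.log P := by
    have h1 : Real.log (Real.exp ((k : ℝ) + 1)) ≤ Real.log P :=
      Real.log_le_log (Real.exp_pos _) (by linarith)
    rwa [Real.log_exp] at h1
  have hLP : 0 < Real.log P ^ k := pow_pos (by linarith) k
  have hbound : P - D * P / Real.log P ^ k ≤ chebTheta (q : ℝ) := by
    have h1 : Real.log P ^ k * (P - chebTheta (q : ℝ)) ≤ D * P := by
      rw [div_le_iff₀ hP0] at hsup
      linarith
    have h2 : P - chebTheta (q : ℝ) ≤ D * P / Real.log P ^ k := by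
      rw [le_div_iff₀ hLP, mul_comm]
      exact h1
    linarith
  have hmono := mono_f k hk1 D hDk
  have hxmem : x ∈ Set.Ici (Real.exp ((k : ℝ) + 1)) := le_of_lt hcx
  have hPmem : P ∈ Set.Ici (Real.exp ((k : ℝ) + 1)) := le_of_lt (lt_trans hcx hxP)
  have h5 : x - D * x / Real.log x ^ k ≤ P - D * P / Real.log P ^ k :=
    hmono hxmem hPmem hxP.le
  rw [ge_iff_le, htheta]
  linarith
end
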